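/- For every n ≥ 0, H(n, n+1) = 1; that is, the identity is the unique permutation π ∈ Equiv.Perm (Fin n) whose cycle graph has n+1 alternating cycles (equivalently, the genus-0 generating function satisfies H_0(x) = 1/(1−x)). -/

import Mathlib

/-- The permutation of `ZMod (n+1)` fixing `0` and acting as `π` on `{1,…,n}`
(the element `i+1` of `ZMod (n+1)` corresponding to `i : Fin n`). -/
def pihat {n : ℕ} (π : Equiv.Perm (Fin n)) : Equiv.Perm (ZMod (n+1)) :=
  Equiv.Perm.decomposeFin.symm (0, π)

/-- The permutation `v ↦ π̂ (π̂⁻¹ (v+1) - 1)` of `ZMod (n+1)`, whose orbits are the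
alternating cycles of the cycle graph of `π`. -/
def cpi {n : ℕ} (π : Equiv.Perm (Fin n)) : Equiv.Perm (ZMod (n+1)) :=
  (Equiv.addRight (1 : ZMod (n+1))).trans
    ((pihat π).symm.trans ((Equiv.subRight (1 : ZMod (n+1))).trans (pihat π)))

/-- `A n π` is the number of alternating cycles of the cycle graph of `π`: the number of
orbits of the cyclic group generated by `cpi π` acting on `ZMod (n+1)`. -/
noncomputable def A (n : ℕ) (π : Equiv.Perm (Fin n)) : ℕ :=
  Nat.card (MulAction.orbitRel.Quotient (Subgroup.zpowers (cpi π)) (ZMod (n+1)))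

/-- The Hultman number `H n k`: the number of permutations of `Fin n` whose cycle graph
has exactly `k` alternating cycles. -/
noncomputable def H (n k : ℕ) : ℕ := Nat.card {π : Equiv.Perm (Fin n) // A n π = k}

lemma pihat_zero {n : ℕ} (π : Equiv.Perm (Fin n)) : pihat π (0 : ZMod (n+1)) = 0 := by
  show Equiv.Perm.decomposeFin.symm (0, π) (0 : Fin (n+1)) = 0
  exact Equiv.Perm.decomposeFin_symm_apply_zero 0 π

lemma pihat_one {n : ℕ} : pihat (1 : Equiv.Perm (Fin n)) = 1 := by
  ext v
  show Equiv.Perm.decomposeFin.symm ((0 : Fin (n+1)), (1 : Equiv.Perm (Fin n))) v = v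
  rw [Equiv.Perm.decomposeFin_symm_of_one, Equiv.swap_self]
  rfl

lemma key {n : ℕ} (π : Equiv.Perm (Fin n)) (h : ∀ v, cpi π v = v) : π = 1 := by
  have hadd : ∀ v : ZMod (n+1), (pihat π).symm (v + 1) = (pihat π).symm v + 1 := by
    intro v
    have h1 := h v
    simp only [cpi, Equiv.trans_apply, Equiv.coe_addRight, Equiv.subRight_apply] at h1
    have h2 := (pihat π).symm.congr_arg h1
    rw [Equiv.symm_apply_apply] at h2
    -- h2 : symm (v+1) - 1 = symm v
    rw [← h2, sub_add_cancel]
  have hnat : ∀ k : ℕ, (pihat π).symm (k : ZMod (n+1)) = k := by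
    intro k
    induction k with
    | zero =>
      simpa using (pihat π).symm_apply_eq.mpr (pihat_zero π).symm
    | succ m ih =>
      push_cast
      rw [hadd, ih]
  have hsymm : (pihat π).symm = 1 := by
    ext v
    have := hnat v.val
    rwa [ZMod.natCast_val, ZMod.cast_id] at this
  have hpihat : pihat π = 1 := by
    have := congrArg Equiv.symm hsymm
    simpa [Equiv.Perm.one_symm] using this
  have : pihat π = pihat 1 := by rw [hpihat, pihat_one]
  have h3 : Equiv.Perm.decomposeFin (pihat π) = Equiv.Perm.decomposeFin (pihat 1) := by
    rw [this]
  unfold pihat at h3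
  simp only [Equiv.apply_symm_apply] at h3
  exact (Prod.mk.injEq _ _ _ _ ▸ h3).2

lemma cpi_one {n : ℕ} : cpi (1 : Equiv.Perm (Fin n)) = 1 := by
  ext v
  simp [cpi, pihat_one, Equiv.Perm.one_symm]

/-- `H(n, n+1) = 1`: the identity is the unique permutation of `Fin n` whose cycle graph
has `n+1` alternating cycles. -/
theorem hultman_top (n : ℕ) :
    H n (n + 1) = 1 ∧ ∀ π : Equiv.Perm (Fin n), A n π = n + 1 ↔ π = 1 := by
  have main : ∀ π : Equiv.Perm (Fin n), A n π = n + 1 ↔ π = 1 := by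
    intro π
    constructor
    · intro hA
      apply key
      intro v
      have hsurj : Function.Surjective
          (Quotient.mk'' : ZMod (n+1) → MulAction.orbitRel.Quotient (Subgroup.zpowers (cpi π)) (ZMod (n+1))) :=
        Quotient.mk''_surjective
      have hcard : Nat.card (ZMod (n+1)) =
          Nat.card (MulAction.orbitRel.Quotient (Subgroup.zpowers (cpi π)) (ZMod (n+1))) := by
        rw [Nat.card_zmod]; exact hA.symm
      have hbij : Function.Bijective
          (Quotient.mk'' : ZMod (n+1) → MulAction.orbitRel.Quotient (Subgroup.zpowers (cpi π)) (ZMod (n+1))) :=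
        Nat.bijective_iff_surjective_and_card _ |>.mpr ⟨hsurj, hcard⟩
      have : Quotient.mk'' (cpi π v) = (Quotient.mk'' v :
          MulAction.orbitRel.Quotient (Subgroup.zpowers (cpi π)) (ZMod (n+1))) := by
        apply Quotient.sound'
        exact ⟨⟨cpi π, Subgroup.mem_zpowers _⟩, rfl⟩
      exact hbij.1 this
    · rintro rfl
      unfold A
      rw [cpi_one]
      have hbij : Function.Bijective
          (Quotient.mk'' : ZMod (n+1) → MulAction.orbitRel.Quotient (Subgroup.zpowers (1 : Equiv.Perm (ZMod (n+1)))) (ZMod (n+1))) := by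
        refine ⟨?_, Quotient.mk''_surjective⟩
        intro a b hab
        obtain ⟨g, hg⟩ := Quotient.exact' hab
        have : (g : Equiv.Perm (ZMod (n+1))) = 1 := by
          obtain ⟨k, hk⟩ := g.2
          simp only [one_zpow] at hk
          exact hk.symm
        rw [← hg]
        show (g : Equiv.Perm (ZMod (n+1))) b = b
        rw [this]; rfl
      rw [← Nat.card_eq_of_bijective _ hbij, Nat.card_zmod]
  refine ⟨?_, main⟩
  unfold H
  have e : {π : Equiv.Perm (Fin n) // A n π = n + 1} ≃ {π : Equiv.Perm (Fin n) // π = 1} :=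
    Equiv.subtypeEquivRight main
  rw [Nat.card_congr e]
  simp [Nat.card_eq_one_iff_unique]
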